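/- If a privacy mechanism P_{Y|X} satisfies (ε,δ)-PML, i.e., P_Y{ y : ℓ(X→y) ≤ ε } ≥ 1−δ, then maximal leakage satisfies L(P_{Y|X}) ≤ log(exp(ε) + δ·exp(ε_max)), where ε_max = −log min_{x ∈ supp(P_X)} P_X(x). -/
import Mathlib


/-- (ε,δ)-PML implies L(P_{Y|X}) ≤ log(exp ε + δ·exp ε_max), where
ε_max = −log min_{x∈supp(P_X)} P_X(x). -/
theorem stmt_9 {α β : Type*} [Fintype α] [Fintype β]
    (p : α → β → ℝ)
    (hp : ∀ x y, 0 ≤ p x y)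
    (hsum : ∑ x, ∑ y, p x y = 1)
    (pX : α → ℝ) (hpX : ∀ x, pX x = ∑ y, p x y)
    (pY : β → ℝ) (hpY : ∀ y, pY y = ∑ x, p x y)
    (sX : Finset α) (hsX : ∀ x, x ∈ sX ↔ 0 < pX x) (hneX : sX.Nonempty)
    (ε δ : ℝ) (hε : 0 ≤ ε) (hδ0 : 0 ≤ δ) (hδ1 : δ ≤ 1)
    (G : Finset β)
    (hG : ∀ y, y ∈ G ↔
      Real.log (sX.sup' hneX fun x => p x y / (pX x * pY y)) ≤ ε)
    (hPML : 1 - δ ≤ ∑ y ∈ G, pY y) :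
    Real.log (∑ y, pY y * (sX.sup' hneX fun x => p x y / (pX x * pY y))) ≤
      Real.log (Real.exp ε + δ * Real.exp (- Real.log (sX.inf' hneX pX))) := by
  classical
  have hpYnn : ∀ y, 0 ≤ pY y := fun y => (hpY y) ▸ Finset.sum_nonneg fun x _ => hp x y
  have hpXpos : ∀ x ∈ sX, 0 < pX x := fun x hx => (hsX x).1 hx
  have hinf_pos : 0 < sX.inf' hneX pX := by
    obtain ⟨x, hx, hxe⟩ := sX.exists_mem_eq_inf' hneX pX
    rw [hxe]; exact hpXpos x hx
  have hple : ∀ x y, p x y ≤ pY y := by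
    intro x y
    rw [hpY y]
    exact Finset.single_le_sum (fun x _ => hp x y) (Finset.mem_univ x)
  set M : β → ℝ := fun y => sX.sup' hneX fun x => p x y / (pX x * pY y) with hM
  have hMbound : ∀ y, M y ≤ (sX.inf' hneX pX)⁻¹ := by
    intro y
    apply Finset.sup'_le
    intro x hx
    rcases eq_or_lt_of_le (hpYnn y) with h0 | h0
    · rw [← h0, mul_zero, div_zero]
      positivity
    · have hx' := hpXpos x hx
      rw [div_le_iff₀ (by positivity)]
      calc p x y ≤ pY y := hple x y
        _ = (sX.inf' hneX pX)⁻¹ * (sX.inf' hneX pX * pY y) := by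
            field_simp
        _ ≤ (sX.inf' hneX pX)⁻¹ * (pX x * pY y) := by
            apply mul_le_mul_of_nonneg_left _ (by positivity)
            exact mul_le_mul_of_nonneg_right (Finset.inf'_le pX hx) (le_of_lt h0)
  have hMnn : ∀ y, 0 ≤ M y := by
    intro y
    obtain ⟨x, hx⟩ := hneX
    refine le_trans ?_ (Finset.le_sup' _ hx)
    have h1 := hp x y
    have h2 := hpXpos x hx
    have h3 := hpYnn y
    positivity
  have hMexp : ∀ y ∈ G, M y ≤ Real.exp ε := by
    intro y hy
    have h := (hG y).1 hy
    rcases eq_or_lt_of_le (hMnn y) with h0 | h0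
    · rw [← h0]; positivity
    · exact (Real.log_le_iff_le_exp h0).1 h
  have hsumY : ∑ y, pY y = 1 := by
    simp_rw [hpY]
    rw [Finset.sum_comm]; exact hsum
  have hGsub : G ⊆ Finset.univ := Finset.subset_univ G
  have hsplit : ∑ y ∈ Finset.univ \ G, pY y * M y + ∑ y ∈ G, pY y * M y
      = ∑ y, pY y * M y := Finset.sum_sdiff hGsub
  have hGc : ∑ y ∈ Finset.univ \ G, pY y ≤ δ := by
    have h := Finset.sum_sdiff (f := pY) hGsub
    rw [hsumY] at h
    linarith
  have h1 : ∑ y ∈ G, pY y * M y ≤ Real.exp ε := by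
    calc ∑ y ∈ G, pY y * M y ≤ ∑ y ∈ G, pY y * Real.exp ε :=
          Finset.sum_le_sum fun y hy => mul_le_mul_of_nonneg_left (hMexp y hy) (hpYnn y)
      _ = (∑ y ∈ G, pY y) * Real.exp ε := by rw [Finset.sum_mul]
      _ ≤ 1 * Real.exp ε := by
          apply mul_le_mul_of_nonneg_right _ (Real.exp_nonneg ε)
          rw [← hsumY]
          exact Finset.sum_le_sum_of_subset_of_nonneg hGsub (fun y _ _ => hpYnn y)
      _ = Real.exp ε := one_mul _
  have h2 : ∑ y ∈ Finset.univ \ G, pY y * M y ≤ δ * (sX.inf' hneX pX)⁻¹ := by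
    calc ∑ y ∈ Finset.univ \ G, pY y * M y
        ≤ ∑ y ∈ Finset.univ \ G, pY y * (sX.inf' hneX pX)⁻¹ :=
          Finset.sum_le_sum fun y _ => mul_le_mul_of_nonneg_left (hMbound y) (hpYnn y)
      _ = (∑ y ∈ Finset.univ \ G, pY y) * (sX.inf' hneX pX)⁻¹ := by rw [Finset.sum_mul]
      _ ≤ δ * (sX.inf' hneX pX)⁻¹ :=
          mul_le_mul_of_nonneg_right hGc (by positivity)
  have hexpneg : Real.exp (- Real.log (sX.inf' hneX pX)) = (sX.inf' hneX pX)⁻¹ := by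
    rw [Real.exp_neg, Real.exp_log hinf_pos]
  have hmain : ∑ y, pY y * M y ≤ Real.exp ε + δ * Real.exp (- Real.log (sX.inf' hneX pX)) := by
    rw [hexpneg, ← hsplit]; linarith
  rcases eq_or_lt_of_le (Finset.sum_nonneg fun y (_ : y ∈ Finset.univ) =>
      mul_nonneg (hpYnn y) (hMnn y)) with h0 | h0
  · rw [← h0, Real.log_zero]
    apply Real.log_nonneg
    have h1' : (1:ℝ) ≤ Real.exp ε := Real.one_le_exp hε
    nlinarith [Real.exp_nonneg (- Real.log (sX.inf' hneX pX))]
  · exact Real.log_le_log h0 hmain
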